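/- There exists c > 0, depending only on w, such that for every integer ℓ ≥ 1 and all r, ρ ∈ [0,1] satisfying the equal-area equation ℓ(4−(4−w)r²) = (ℓ+1)(4−(4−w)ρ²) and the equal-surface-tension equation ℓ(8−2r(4−w)) = (ℓ+1)(8−2ρ(4−w)), one has r ≥ c. -/

import Mathlib

set_option maxHeartbeats 800000


/-- there is `c > 0`, depending only on `w`, such that for every integer
`ℓ ≥ 1` and all radii `r, ρ ∈ [0,1]` satisfying the equal-area equation
`ℓ(4−(4−w)r²) = (ℓ+1)(4−(4−w)ρ²)` and the equal-surface-tension equation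
`ℓ(8−2r(4−w)) = (ℓ+1)(8−2ρ(4−w))`, one has `r ≥ c`. -/
theorem transition_radius_bounded_below (w : ℝ) (hw0 : 0 < w) (hw4 : w < 4)
    (hnd : ∀ n : ℕ, (n : ℝ) ≠ 4 / (4 - w)) :
    ∃ c : ℝ, 0 < c ∧ ∀ ℓ : ℕ, 1 ≤ ℓ → ∀ r ρ : ℝ,
      r ∈ Set.Icc (0 : ℝ) 1 → ρ ∈ Set.Icc (0 : ℝ) 1 →
      (ℓ : ℝ) * (4 - (4 - w) * r ^ 2) = ((ℓ : ℝ) + 1) * (4 - (4 - w) * ρ ^ 2) →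
      (ℓ : ℝ) * (8 - 2 * r * (4 - w)) = ((ℓ : ℝ) + 1) * (8 - 2 * ρ * (4 - w)) →
      c ≤ r := by
  have ha : (0:ℝ) < 4 - w := by linarith
  set ℓ₀ : ℕ := ⌈w / (4 - w)⌉₊ with hℓ₀def
  have hwa : 0 < w / (4 - w) := div_pos hw0 ha
  have hl0pos : 0 < ℓ₀ := Nat.ceil_pos.mpr hwa
  have hl0posR : (0:ℝ) < (ℓ₀ : ℝ) := by exact_mod_cast hl0pos
  have hl0gt : w / (4 - w) < (ℓ₀ : ℝ) := by
    refine lt_of_le_of_ne (Nat.le_ceil _) fun h => hnd (ℓ₀ + 1) ?_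
    push_cast
    rw [← h]
    field_simp
    ring
  -- the constant
  set X : ℝ := 4 * w * ((ℓ₀ : ℝ) + 1) / (ℓ₀ : ℝ) with hXdef
  have hXpos : 0 < X := by positivity
  have hX16 : X < 16 := by
    rw [div_lt_iff₀ hl0posR]
    have : w < (4 - w) * (ℓ₀ : ℝ) := by
      rwa [div_lt_iff₀ ha, mul_comm] at hl0gt
    nlinarith
  have hsqrtX : Real.sqrt X < 4 := by
    have h4 : (4:ℝ) = Real.sqrt 16 := by
      rw [show (16:ℝ) = 4 ^ 2 by norm_num, Real.sqrt_sq (by norm_num)]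
    rw [h4]
    exact Real.sqrt_lt_sqrt (le_of_lt hXpos) hX16
  refine ⟨(4 - Real.sqrt X) / (4 - w), div_pos (by linarith) ha, ?_⟩
  intro ℓ hℓ r ρ hr hρ harea hsurf
  obtain ⟨hr0, hr1⟩ := hr
  have hL : (1:ℝ) ≤ (ℓ : ℝ) := by exact_mod_cast hℓ
  have hLpos : (0:ℝ) < (ℓ : ℝ) := by linarith
  -- key algebraic identity
  have key2 : ((ℓ:ℝ))^2 * (4 - (4 - w) * r)^2 = 4 * w * (ℓ:ℝ) * ((ℓ:ℝ) + 1) := by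
    linear_combination (-(4 - w) * (ℓ:ℝ) * ((ℓ:ℝ) + 1)) * harea +
      ((ℓ:ℝ) * (((ℓ:ℝ) + 1) * (4 - w) * ρ + (ℓ:ℝ) * (4 - w) * r + 4) / 2) * hsurf
  have key : (ℓ:ℝ) * (4 - (4 - w) * r)^2 = 4 * w * ((ℓ:ℝ) + 1) := by
    apply mul_left_cancel₀ (ne_of_gt hLpos)
    linear_combination key2
  -- bounds on s = 4 - (4-w) r
  have hsle : (4 - w) * r ≤ 4 - w := by
    nlinarith
  have hs0 : 0 ≤ 4 - (4 - w) * r := by linarith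
  have hs4 : 4 - (4 - w) * r ≤ 4 := by nlinarith
  -- ℓ₀ ≤ ℓ
  have hs216 : (4 - (4 - w) * r)^2 ≤ 16 := by nlinarith
  have hwl : w ≤ (4 - w) * (ℓ : ℝ) := by
    have h16 : (ℓ:ℝ) * (4 - (4 - w) * r)^2 ≤ (ℓ:ℝ) * 16 :=
      mul_le_mul_of_nonneg_left hs216 (le_of_lt hLpos)
    nlinarith
  have hl0le : (ℓ₀ : ℝ) ≤ (ℓ : ℝ) := by
    have : ℓ₀ ≤ ℓ := Nat.ceil_le.mpr (by rw [div_le_iff₀ ha]; linarith)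
    exact_mod_cast this
  -- (4 - (4-w) r)^2 ≤ X
  have hsq : (4 - (4 - w) * r)^2 = 4 * w * ((ℓ:ℝ) + 1) / (ℓ:ℝ) := by
    field_simp
    linear_combination key
  have hmono : 4 * w * ((ℓ:ℝ) + 1) / (ℓ:ℝ) ≤ X := by
    rw [hXdef, div_le_div_iff₀ hLpos hl0posR]
    nlinarith
  have hsX : (4 - (4 - w) * r)^2 ≤ X := by rw [hsq]; exact hmono
  have hfin : 4 - (4 - w) * r ≤ Real.sqrt X := by
    have := Real.sqrt_le_sqrt hsX
    rwa [Real.sqrt_sq hs0] at this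
  rw [div_le_iff₀ ha]
  linarith
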